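/- Let p(s,t,φ,ψ) be a joint distribution of disjoint signals with φ, ψ independent, and suppose the payoff function depends only on (s, t, φ): π = π(s,t,φ). Define p̃(s,t,φ,ψ) = p(s,t,φ)·p(ψ). Then: (1) p̃ is state-consistent, i.e., its (φ,ψ)-marginal equals p(φ)p(ψ); (2) the expected payoff under p̃ equals the expected payoff under p: ∑_{s,t,φ,ψ} π(s,t,φ) p̃(s,t,φ,ψ) = ∑_{s,t,φ,ψ} π(s,t,φ) p(s,t,φ,ψ); and (3) the variables under p̃ are classically generated (with x = t as the shared randomness). -/

import Mathlib

variable {S T Φ Ψ : Type*} [Fintype S] [Fintype T] [Fintype Φ] [Fintype Ψ]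

/-- `p` is a joint probability distribution of `(s, t, φ, ψ)`. -/
def IsDist (p : S → T → Φ → Ψ → ℝ) : Prop :=
  (∀ s t φ ψ, 0 ≤ p s t φ ψ) ∧ ∑ s, ∑ t, ∑ φ, ∑ ψ, p s t φ ψ = 1

/-- Marginal `p(φ)`. -/
def mΦ (p : S → T → Φ → Ψ → ℝ) (φ : Φ) : ℝ := ∑ s, ∑ t, ∑ ψ, p s t φ ψ
/-- Marginal `p(ψ)`. -/
def mΨ (p : S → T → Φ → Ψ → ℝ) (ψ : Ψ) : ℝ := ∑ s, ∑ t, ∑ φ, p s t φ ψ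
/-- Marginal `p(t)`. -/
def mT (p : S → T → Φ → Ψ → ℝ) (t : T) : ℝ := ∑ s, ∑ φ, ∑ ψ, p s t φ ψ
/-- Marginal `p(φ, ψ)`. -/
def mΦΨ (p : S → T → Φ → Ψ → ℝ) (φ : Φ) (ψ : Ψ) : ℝ := ∑ s, ∑ t, p s t φ ψ
/-- Marginal `p(φ, s)`. -/
def mΦS (p : S → T → Φ → Ψ → ℝ) (φ : Φ) (s : S) : ℝ := ∑ t, ∑ ψ, p s t φ ψ
/-- Marginal `p(ψ, t)`. -/
def mΨT (p : S → T → Φ → Ψ → ℝ) (ψ : Ψ) (t : T) : ℝ := ∑ s, ∑ φ, p s t φ ψ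
/-- Marginal `p(ψ, φ, s)`. -/
def mΨΦS (p : S → T → Φ → Ψ → ℝ) (ψ : Ψ) (φ : Φ) (s : S) : ℝ := ∑ t, p s t φ ψ
/-- Marginal `p(φ, ψ, t)`. -/
def mΦΨT (p : S → T → Φ → Ψ → ℝ) (φ : Φ) (ψ : Ψ) (t : T) : ℝ := ∑ s, p s t φ ψ
/-- Marginal `p(t, φ)`. -/
def mTΦ (p : S → T → Φ → Ψ → ℝ) (t : T) (φ : Φ) : ℝ := ∑ s, ∑ ψ, p s t φ ψ
/-- Marginal `p(s, t, φ)`. -/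
def mSTΦ (p : S → T → Φ → Ψ → ℝ) (s : S) (t : T) (φ : Φ) : ℝ := ∑ ψ, p s t φ ψ

/-- `φ` and `ψ` are independent under `p`. -/
def IndepStates (p : S → T → Φ → Ψ → ℝ) : Prop :=
  ∀ φ ψ, mΦΨ p φ ψ = mΦ p φ * mΨ p ψ

/-- The signals are disjoint: `P(ψ | φ, s) = P(ψ | φ)` and `P(φ | ψ, t) = P(φ | ψ)`
whenever the conditioning events have positive probability. -/
def Disjoint' (p : S → T → Φ → Ψ → ℝ) : Prop :=
  (∀ ψ φ s, 0 < mΦS p φ s →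
      mΨΦS p ψ φ s / mΦS p φ s = mΦΨ p φ ψ / mΦ p φ) ∧
  (∀ φ ψ t, 0 < mΨT p ψ t →
      mΦΨT p φ ψ t / mΨT p ψ t = mΦΨ p φ ψ / mΨ p ψ)

/-- The signals are classically generated: there is a finitely-valued shared
random variable `x` (with distribution `μ`), independent of `(φ, ψ)`, and
response kernels `f(s | x, φ)`, `g(t | x, ψ)` such that the joint distribution
is `p(s,t,φ,ψ) = p(φ) p(ψ) ∑_x μ(x) f(s|x,φ) g(t|x,ψ)`; equivalently
`p(s,t | x, φ, ψ) = p(s | x, φ) · p(t | x, ψ)` with `x ⊥ (φ, ψ)`. -/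
def ClassicallyGenerated (p : S → T → Φ → Ψ → ℝ) : Prop :=
  ∃ (k : ℕ) (μ : Fin k → ℝ) (f : Fin k → Φ → S → ℝ) (g : Fin k → Ψ → T → ℝ),
    (∀ x, 0 ≤ μ x) ∧ (∑ x, μ x = 1) ∧
    (∀ x φ s, 0 ≤ f x φ s) ∧ (∀ x φ, ∑ s, f x φ s = 1) ∧
    (∀ x ψ t, 0 ≤ g x ψ t) ∧ (∀ x ψ, ∑ t, g x ψ t = 1) ∧
    (∀ s t φ ψ, p s t φ ψ = mΦ p φ * mΨ p ψ * ∑ x, μ x * f x φ s * g x ψ t)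


section Aux
variable (p : S → T → Φ → Ψ → ℝ)

lemma swap_psi_out (f : S → T → Φ → Ψ → ℝ) :
    ∑ ψ, ∑ s, ∑ t, ∑ φ, f s t φ ψ = ∑ s, ∑ t, ∑ φ, ∑ ψ, f s t φ ψ := by
  rw [Finset.sum_comm]
  refine Finset.sum_congr rfl fun s _ => ?_
  rw [Finset.sum_comm]
  refine Finset.sum_congr rfl fun t _ => ?_
  rw [Finset.sum_comm]

lemma sum_mPsi (hp : IsDist p) : ∑ ψ, mΨ p ψ = 1 := by
  simp only [mΨ]
  rw [swap_psi_out]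
  exact hp.2

lemma sum_mT (hp : IsDist p) : ∑ t, mT p t = 1 := by
  simp only [mT]
  rw [Finset.sum_comm]
  exact hp.2

lemma sum_mSTΦ (φ : Φ) : ∑ s, ∑ t, mSTΦ p s t φ = mΦ p φ := rfl

lemma mΨ_nonneg (hp : IsDist p) (ψ : Ψ) : 0 ≤ mΨ p ψ :=
  Finset.sum_nonneg fun _ _ => Finset.sum_nonneg fun _ _ =>
    Finset.sum_nonneg fun _ _ => hp.1 _ _ _ _

lemma mΨT_nonneg (hp : IsDist p) (ψ : Ψ) (t : T) : 0 ≤ mΨT p ψ t :=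
  Finset.sum_nonneg fun _ _ => Finset.sum_nonneg fun _ _ => hp.1 _ _ _ _

lemma mΨT_le_mΨ (hp : IsDist p) (ψ : Ψ) (t : T) : mΨT p ψ t ≤ mΨ p ψ := by
  have h : mΨ p ψ = ∑ t, mΨT p ψ t := by
    simp only [mΨ, mΨT]
    exact Finset.sum_comm
  rw [h]
  exact Finset.single_le_sum (fun t' _ => mΨT_nonneg p hp ψ t') (Finset.mem_univ t)

lemma mΨT_eq_sum (ψ : Ψ) (t : T) : mΨT p ψ t = ∑ φ, mΦΨT p φ ψ t := by
  simp only [mΨT, mΦΨT]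
  exact Finset.sum_comm

/-- Key consequence of disjointness + independence: `t ⊥ φ`. -/
lemma key (hp : IsDist p) (hindep : IndepStates p) (hdisj : Disjoint' p)
    (t : T) (φ : Φ) : mTΦ p t φ = mΦ p φ * mT p t := by
  have hterm : ∀ ψ, mΦΨT p φ ψ t = mΦ p φ * mΨT p ψ t := by
    intro ψ
    rcases lt_or_eq_of_le (mΨT_nonneg p hp ψ t) with hpos | hzero
    · have h := hdisj.2 φ ψ t hpos
      have hψ : 0 < mΨ p ψ := lt_of_lt_of_le hpos (mΨT_le_mΨ p hp ψ t)
      rw [hindep φ ψ] at h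
      rw [mul_div_assoc, div_self (ne_of_gt hψ), mul_one] at h
      rw [div_eq_iff (ne_of_gt hpos)] at h
      rw [h]
    · have hnn : ∀ φ' ∈ Finset.univ, 0 ≤ mΦΨT p φ' ψ t := fun φ' _ =>
        Finset.sum_nonneg fun _ _ => hp.1 _ _ _ _
      have h0 : ∑ φ', mΦΨT p φ' ψ t = 0 := by
        rw [← mΨT_eq_sum, ← hzero]
      have := (Finset.sum_eq_zero_iff_of_nonneg hnn).mp h0 φ (Finset.mem_univ φ)
      rw [this, ← hzero, mul_zero]
  have h1 : mTΦ p t φ = ∑ ψ, mΦΨT p φ ψ t := by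
    simp only [mTΦ, mΦΨT]
    exact Finset.sum_comm
  rw [h1]
  simp only [hterm]
  rw [← Finset.mul_sum]
  congr 1
  simp only [mΨT, mT]
  rw [Finset.sum_comm]
  refine Finset.sum_congr rfl fun s _ => Finset.sum_comm

end Aux

/-- For a payoff depending only on `(s, t, φ)`, the modified distribution
`p̃(s,t,φ,ψ) = p(s,t,φ)·p(ψ)` is state-consistent, achieves the same expected
payoff as `p`, and is classically generated (with `x = t`). -/

theorem payoff_dep_one_state_classical (p : S → T → Φ → Ψ → ℝ)
    (hp : IsDist p) (hindep : IndepStates p) (hdisj : Disjoint' p)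
    (π : S → T → Φ → ℝ) :
    (∀ φ ψ, ∑ s, ∑ t, (mSTΦ p s t φ * mΨ p ψ) = mΦ p φ * mΨ p ψ) ∧
    (∑ s, ∑ t, ∑ φ, ∑ ψ, π s t φ * (mSTΦ p s t φ * mΨ p ψ) =
      ∑ s, ∑ t, ∑ φ, ∑ ψ, π s t φ * p s t φ ψ) ∧
    ClassicallyGenerated (fun s t φ ψ => mSTΦ p s t φ * mΨ p ψ) := by
  have hnn : ∀ s t φ ψ, 0 ≤ p s t φ ψ := hp.1
  have hmSTΦ_nn : ∀ s t φ, 0 ≤ mSTΦ p s t φ := fun s t φ =>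
    Finset.sum_nonneg fun _ _ => hnn _ _ _ _
  have htotΨ := sum_mPsi p hp
  -- part 1
  have part1 : ∀ φ ψ, ∑ s, ∑ t, (mSTΦ p s t φ * mΨ p ψ) = mΦ p φ * mΨ p ψ := by
    intro φ ψ
    simp only [← Finset.sum_mul]
    rw [sum_mSTΦ]
  refine ⟨part1, ?_, ?_⟩
  -- part 2
  · refine Finset.sum_congr rfl fun s _ => Finset.sum_congr rfl fun t _ =>
      Finset.sum_congr rfl fun φ _ => ?_
    have hL : ∑ ψ, π s t φ * (mSTΦ p s t φ * mΨ p ψ)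
        = (π s t φ * mSTΦ p s t φ) * ∑ ψ, mΨ p ψ := by
      rw [Finset.mul_sum]
      exact Finset.sum_congr rfl fun ψ _ => by ring
    have hR : ∑ ψ, π s t φ * p s t φ ψ = π s t φ * mSTΦ p s t φ := by
      rw [mSTΦ, Finset.mul_sum]
    rw [hL, hR, htotΨ, mul_one]
  -- part 3
  · have hS : Nonempty S := by
      by_contra hne
      have : IsEmpty S := not_nonempty_iff.mp hne
      have := hp.2
      simp [Finset.univ_eq_empty] at this
    obtain ⟨s₀⟩ := hS
    set q : S → T → Φ → Ψ → ℝ := fun s t φ ψ => mSTΦ p s t φ * mΨ p ψ with hq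
    have hqΦ : ∀ φ, mΦ q φ = mΦ p φ := by
      intro φ
      have : mΦ q φ = ∑ s, ∑ t, (mSTΦ p s t φ * ∑ ψ, mΨ p ψ) := by
        simp only [mΦ, hq, Finset.mul_sum]
      rw [this]
      simp only [htotΨ, mul_one]
      rw [sum_mSTΦ]
    have hqΨ : ∀ ψ, mΨ q ψ = mΨ p ψ := by
      intro ψ
      have : mΨ q ψ = (∑ s, ∑ t, ∑ φ, mSTΦ p s t φ) * mΨ p ψ := by
        simp only [mΨ, hq, Finset.sum_mul]
      rw [this]
      have h2 : ∑ s, ∑ t, ∑ φ, mSTΦ p s t φ = 1 := by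
        simp only [mSTΦ]
        exact hp.2
      rw [h2, one_mul]
    classical
    set e : Fin (Fintype.card T) ≃ T := (Fintype.equivFin T).symm with he
    refine ⟨Fintype.card T, fun x => mT p (e x),
      fun x φ s => if 0 < mTΦ p (e x) φ then mSTΦ p s (e x) φ / mTΦ p (e x) φ
        else (if s = s₀ then 1 else 0),
      fun x ψ t => if e x = t then 1 else 0, ?_, ?_, ?_, ?_, ?_, ?_, ?_⟩
    · intro x
      exact Finset.sum_nonneg fun _ _ => Finset.sum_nonneg fun _ _ =>
        Finset.sum_nonneg fun _ _ => hnn _ _ _ _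
    · rw [Equiv.sum_comp e (mT p)]
      exact sum_mT p hp
    · intro x φ s
      dsimp only
      split_ifs with h h2
      · exact div_nonneg (hmSTΦ_nn _ _ _) (le_of_lt h)
      · norm_num
      · norm_num
    · intro x φ
      dsimp only
      split_ifs with h
      · rw [← Finset.sum_div]
        have hsum : ∑ s, mSTΦ p s (e x) φ = mTΦ p (e x) φ := by
          simp only [mSTΦ, mTΦ]
        rw [hsum, div_self (ne_of_gt h)]
      · simp
    · intro x ψ t
      dsimp only
      split_ifs <;> norm_num
    · intro x ψ
      dsimp only
      simp
    · intro s t φ ψ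
      dsimp only
      simp only [hq]
      have hg : ∀ (c : Fin (Fintype.card T) → ℝ),
          (∑ x, c x * (if e x = t then (1:ℝ) else 0)) = c (e.symm t) := by
        intro c
        have : ∀ x, c x * (if e x = t then (1:ℝ) else 0)
            = if x = e.symm t then c x else 0 := by
          intro x
          by_cases hx : e x = t
          · have : x = e.symm t := by rw [← hx, Equiv.symm_apply_apply]
            simp [hx, this]
          · have : x ≠ e.symm t := fun hc => hx (by rw [hc, Equiv.apply_symm_apply])
            simp [hx, this]
        simp only [this]
        simp
      rw [hqΦ, hqΨ]
      have heq :
          (∑ x, mT p (e x) * (if 0 < mTΦ p (e x) φ then mSTΦ p s (e x) φ / mTΦ p (e x) φ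
            else (if s = s₀ then 1 else 0)) * (if e x = t then (1:ℝ) else 0))
          = mT p t * (if 0 < mTΦ p t φ then mSTΦ p s t φ / mTΦ p t φ
            else (if s = s₀ then 1 else 0)) := by
        rw [hg (fun x => mT p (e x) * (if 0 < mTΦ p (e x) φ then mSTΦ p s (e x) φ / mTΦ p (e x) φ
            else (if s = s₀ then 1 else 0)))]
        rw [Equiv.apply_symm_apply]
      rw [heq]
      have hkey := key p hp hindep hdisj t φ
      have hmT_nn : 0 ≤ mT p t := Finset.sum_nonneg fun _ _ =>
        Finset.sum_nonneg fun _ _ => Finset.sum_nonneg fun _ _ => hnn _ _ _ _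
      have hmΦ_nn : 0 ≤ mΦ p φ := Finset.sum_nonneg fun _ _ =>
        Finset.sum_nonneg fun _ _ => Finset.sum_nonneg fun _ _ => hnn _ _ _ _
      by_cases hpos : 0 < mTΦ p t φ
      · rw [if_pos hpos]
        have hmTpos : 0 < mT p t := by
          rcases lt_or_eq_of_le hmT_nn with h | h
          · exact h
          · exfalso; rw [hkey, ← h, mul_zero] at hpos; exact lt_irrefl 0 hpos
        have hmΦpos : 0 < mΦ p φ := by
          rcases lt_or_eq_of_le hmΦ_nn with h | h
          · exact h
          · exfalso; rw [hkey, ← h, zero_mul] at hpos; exact lt_irrefl 0 hpos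
        rw [hkey]
        field_simp
      · rw [if_neg hpos]
        have h0 : mTΦ p t φ = 0 :=
          le_antisymm (not_lt.mp hpos)
            (Finset.sum_nonneg fun _ _ => Finset.sum_nonneg fun _ _ => hnn _ _ _ _)
        have hST0 : mSTΦ p s t φ = 0 := by
          have hsum0 : ∑ s', mSTΦ p s' t φ = 0 := by
            rw [← h0]; simp only [mSTΦ, mTΦ]
          exact (Finset.sum_eq_zero_iff_of_nonneg
            (fun s' _ => hmSTΦ_nn s' t φ)).mp hsum0 s (Finset.mem_univ s)
        have hfac : mΦ p φ * mT p t = 0 := by rw [← hkey, h0]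
        rw [hST0, zero_mul]
        rw [show mΦ p φ * mΨ p ψ * (mT p t * (if s = s₀ then (1:ℝ) else 0))
            = (mΦ p φ * mT p t) * (mΨ p ψ * (if s = s₀ then (1:ℝ) else 0)) by ring,
          hfac, zero_mul]
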